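/- arXiv:1902.06575 — 2 statements merged into one kernel-verified Lean document; each statement's English description precedes it below -/
import Mathlib

section
/- Every finite directed acyclic graph G has a unique minimal spanning subgraph with the same reachability relation as G; its edge set consists exactly of the non-transitive edges of G, i.e., the edges (u,v) such that there is no directed path from u to v of length at least 2. -/
open Relation

private lemma aux_wf {V : Type} [Fintype V] (E : V → V → Prop)
    (hacyc : ∀ v, ¬ Relation.TransGen E v v) :
    WellFounded (fun p q : V × V =>
      ReflTransGen E q.1 p.1 ∧ ReflTransGen E p.2 q.2 ∧
        (TransGen E q.1 p.1 ∨ TransGen E p.2 q.2)) := by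
  letI : IsTrans (V × V) (fun p q : V × V =>
      ReflTransGen E q.1 p.1 ∧ ReflTransGen E p.2 q.2 ∧
        (TransGen E q.1 p.1 ∨ TransGen E p.2 q.2)) := by
    constructor
    rintro p q s ⟨h1, h2, h3⟩ ⟨h4, h5, h6⟩
    refine ⟨h4.trans h1, h2.trans h5, ?_⟩
    rcases h3 with h3 | h3
    · exact Or.inl (TransGen.trans_right h4 h3)
    · exact Or.inr (TransGen.trans_left h3 h5)
  letI : IsIrrefl (V × V) (fun p q : V × V =>
      ReflTransGen E q.1 p.1 ∧ ReflTransGen E p.2 q.2 ∧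
        (TransGen E q.1 p.1 ∨ TransGen E p.2 q.2)) := by
    constructor
    rintro p ⟨-, -, h | h⟩
    · exact hacyc _ h
    · exact hacyc _ h
  exact Finite.wellFounded_of_trans_of_irrefl _

private lemma aux_main {V : Type} [Fintype V] (E : V → V → Prop)
    (hacyc : ∀ v, ¬ Relation.TransGen E v v) :
    ∀ p : V × V, ReflTransGen E p.1 p.2 →
      ReflTransGen (fun x y => E x y ∧ ¬ ∃ w, E x w ∧ TransGen E w y) p.1 p.2 := by
  refine fun p => (aux_wf E hacyc).induction
    (C := fun p => ReflTransGen E p.1 p.2 →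
      ReflTransGen (fun x y => E x y ∧ ¬ ∃ w, E x w ∧ TransGen E w y) p.1 p.2) p ?_
  rintro ⟨a, b⟩ ih h
  dsimp only at ih h ⊢
  rcases h.cases_head with rfl | ⟨c, hac, hcb⟩
  · exact ReflTransGen.refl
  by_cases hnt : ∃ w, E a w ∧ TransGen E w c
  · obtain ⟨w, haw, hwc⟩ := hnt
    have hwb : TransGen E w b := TransGen.trans_left hwc hcb
    have h1 := ih (a, w) ⟨ReflTransGen.refl, hwb.to_reflTransGen, Or.inr hwb⟩
      (ReflTransGen.single haw)
    have h2 := ih (w, b) ⟨ReflTransGen.single haw, ReflTransGen.refl,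
      Or.inl (TransGen.single haw)⟩ hwb.to_reflTransGen
    exact h1.trans h2
  · have h2 := ih (c, b) ⟨ReflTransGen.single hac, ReflTransGen.refl,
      Or.inl (TransGen.single hac)⟩ hcb
    exact ReflTransGen.head ⟨hac, hnt⟩ h2

/-- Every finite DAG has a unique minimal spanning subgraph with the same reachability
relation: the subgraph of non-transitive edges has the same reachability as G, and it
is contained in every spanning subgraph of G with the same reachability relation. -/
theorem stmt4 {V : Type} [Fintype V] (E : V → V → Prop)
    (hacyc : ∀ v, ¬ Relation.TransGen E v v) :
    (∀ a b, Relation.ReflTransGen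
        (fun x y => E x y ∧ ¬ ∃ w, E x w ∧ Relation.TransGen E w y) a b ↔
        Relation.ReflTransGen E a b) ∧
    (∀ E' : V → V → Prop, (∀ a b, E' a b → E a b) →
      (∀ a b, Relation.ReflTransGen E' a b ↔ Relation.ReflTransGen E a b) →
      ∀ a b, (E a b ∧ ¬ ∃ w, E a w ∧ Relation.TransGen E w b) → E' a b) := by
  constructor
  · intro a b
    constructor
    · exact ReflTransGen.mono (by intro x y h; exact h.1) a b
    · exact fun h => aux_main E hacyc (a, b) h
  · rintro E' hsub hequiv a b ⟨hab, hnt⟩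
    have h1 : ReflTransGen E' a b := (hequiv a b).mpr (ReflTransGen.single hab)
    rcases h1.cases_head with rfl | ⟨c, hac, hcb⟩
    · exact absurd (TransGen.single hab) (hacyc a)
    · have hcbE : ReflTransGen E c b := ReflTransGen.mono hsub c b hcb
      rcases hcbE.cases_head with rfl | ⟨d, hcd, hdb⟩
      · exact hac
      · exact absurd ⟨c, hsub a c hac, TransGen.head' hcd hdb⟩ hnt
end

section
/- Let C be a directed cycle (as an edge sequence) in a directed graph whose edge set is partitioned into two classes, 'old' edges forming an acyclic graph G and 'new' edges, where every new edge (u,v) satisfies y(u) < y(v) for a fixed function y on the endpoints of new edges, and every endpoint u of a new edge satisfies: for every nonempty directed path of old edges from u to a vertex w that is an endpoint of a new edge, y(u) < y(w). Then no such directed cycle C can exist; i.e., the union graph is acyclic. -/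
/-- If the old edges form an acyclic graph, every new edge strictly increases y, and
every nonempty old-edge path between endpoints of new edges strictly increases y, then
the union of old and new edges is acyclic. -/
theorem stmt13 {V : Type} [Fintype V] (Eold Enew : V → V → Prop) (y : V → ℝ)
    (hold : ∀ v, ¬ Relation.TransGen Eold v v)
    (hnew : ∀ u v, Enew u v → y u < y v)
    (hmix : ∀ u w, (∃ a, Enew u a ∨ Enew a u) → (∃ a, Enew w a ∨ Enew a w) →
      Relation.TransGen Eold u w → y u < y w) :
    ∀ v, ¬ Relation.TransGen (fun a b => Eold a b ∨ Enew a b) v v := by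
  set R : V → V → Prop := fun a b => Eold a b ∨ Enew a b with hR
  set S : V → Prop := fun v => ∃ a, Enew v a ∨ Enew a v with hS
  -- if s ∈ S, u ∈ S and an old path s → u, then y s ≤ y u
  have hle : ∀ s u, S s → S u → Relation.ReflTransGen Eold s u → y s ≤ y u := by
    intro s u hs hu h
    rcases (Relation.reflTransGen_iff_eq_or_transGen).1 h with rfl | h'
    · exact le_refl _
    · exact (hmix s u hs hu h').le
  -- key lemma
  have L : ∀ u w, Relation.ReflTransGen R u w → S w →
      ∀ s, S s → Relation.ReflTransGen Eold s u → y s ≤ y w := by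
    intro u w h
    induction h using Relation.ReflTransGen.head_induction_on with
    | refl => intro hw s hs hsu; exact hle s w hs hw hsu
    | @head u' c huc hcw ih =>
      intro hw s hs hsu
      rcases huc with hold' | hnew'
      · exact ih hw s hs (hsu.tail hold')
      · have hu' : S u' := ⟨c, Or.inl hnew'⟩
        have hc : S c := ⟨u', Or.inr hnew'⟩
        exact le_of_lt <| calc y s ≤ y u' := hle s u' hs hu' hsu
          _ < y c := hnew _ _ hnew'
          _ ≤ y w := ih hw c hc Relation.ReflTransGen.refl
  -- decomposition lemma
  have D : ∀ v v', Relation.TransGen R v v' →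
      Relation.TransGen Eold v v' ∨
      ∃ a b, Enew a b ∧ Relation.ReflTransGen R v a ∧ Relation.ReflTransGen R b v' := by
    intro v v' h
    induction h using Relation.TransGen.head_induction_on with
    | single hvc =>
      rcases hvc with ho | hn
      · exact Or.inl (Relation.TransGen.single ho)
      · exact Or.inr ⟨_, _, hn, Relation.ReflTransGen.refl, Relation.ReflTransGen.refl⟩
    | @head v0 c hvc hcv' ih =>
      rcases ih with hoc | ⟨a, b, hab, hca, hbv'⟩
      · rcases hvc with ho | hn
        · exact Or.inl (hoc.head ho)
        · exact Or.inr ⟨_, _, hn, Relation.ReflTransGen.refl, Relation.ReflTransGen.mono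
            (fun x y h => Or.inl h) _ _ hoc.to_reflTransGen⟩
      · exact Or.inr ⟨a, b, hab, hca.head hvc, hbv'⟩
  intro v hv
  rcases D v v hv with ho | ⟨a, b, hab, hva, hbv⟩
  · exact hold v ho
  · have ha : S a := ⟨b, Or.inl hab⟩
    have hb : S b := ⟨a, Or.inr hab⟩
    have : y b ≤ y a := L b a (hbv.trans hva) ha b hb Relation.ReflTransGen.refl
    exact absurd (hnew _ _ hab) (not_lt.2 this)
end
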